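/- For sorted R in [0,1]ⁿ, 0 ≤ V(R) ≤ 1/n!, with equality V(R) = 1/n! if and only if rᵢ = 1 for all i. -/

import Mathlib

open MeasureTheory Set
open scoped ENNReal

namespace Stmt7Aux

variable {n : ℕ}

lemma measSet_strict (σ : Equiv.Perm (Fin n)) :
    MeasurableSet {s : Fin n → ℝ | StrictMono (s ∘ σ)} := by
  have : {s : Fin n → ℝ | StrictMono (s ∘ σ)}
      = ⋂ (i) (j) (_ : i < j), {s : Fin n → ℝ | s (σ i) < s (σ j)} := by
    ext s; simp [StrictMono, Set.mem_iInter, Function.comp]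
  rw [this]
  exact MeasurableSet.iInter fun i => MeasurableSet.iInter fun j => MeasurableSet.iInter
    fun _ => measurableSet_lt (measurable_pi_apply _) (measurable_pi_apply _)

/-- the cube -/
def C (n : ℕ) : Set (Fin n → ℝ) := Set.univ.pi fun _ => Icc (0:ℝ) 1

lemma measC : MeasurableSet (C n) :=
  MeasurableSet.univ_pi fun _ => measurableSet_Icc

lemma volC : volume (C n) = 1 := by
  rw [C, volume_pi_pi]; simp

/-- the ordered pieces -/
def B (n : ℕ) (σ : Equiv.Perm (Fin n)) : Set (Fin n → ℝ) :=
  C n ∩ {s | StrictMono (s ∘ σ)}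

lemma measB (σ : Equiv.Perm (Fin n)) : MeasurableSet (B n σ) :=
  measC.inter (measSet_strict σ)

lemma perm_eq_one_of_strictMono (π : Equiv.Perm (Fin n)) (h : StrictMono π) : π = 1 := by
  have h2 := Subsingleton.elim (StrictMono.orderIsoOfSurjective π h π.surjective)
    (OrderIso.refl _)
  ext i
  have h3 := congrArg (fun f => (f : Fin n ≃o Fin n) i) h2
  simp only [OrderIso.refl_apply] at h3
  rw [show ((StrictMono.orderIsoOfSurjective π h π.surjective) i) = π i from rfl] at h3
  simp [h3]

lemma disjB : Pairwise (Function.onFun Disjoint (B n)) := by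
  intro σ τ hst
  rw [Function.onFun, Set.disjoint_left]
  rintro s ⟨-, hσ⟩ ⟨-, hτ⟩
  apply hst
  have hπ : StrictMono (σ.trans τ.symm) := by
    intro i j hij
    have h1 : s (σ i) < s (σ j) := hσ hij
    have h2 : (s ∘ τ) (τ.symm (σ i)) < (s ∘ τ) (τ.symm (σ j)) := by
      simpa [Function.comp] using h1
    exact hτ.lt_iff_lt.mp h2
  have h1 := perm_eq_one_of_strictMono _ hπ
  apply Equiv.ext
  intro i
  have := congrArg (fun f : Equiv.Perm (Fin n) => τ (f i)) h1
  simpa using this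

lemma memC_comp (σ : Equiv.Perm (Fin n)) (s : Fin n → ℝ) : s ∘ σ ∈ C n ↔ s ∈ C n := by
  constructor <;> intro h i _
  · simpa using h (σ.symm i) (mem_univ _)
  · exact h (σ i) (mem_univ _)

lemma volB (σ : Equiv.Perm (Fin n)) : volume (B n σ) = volume (B n 1) := by
  have hmp := volume_measurePreserving_piCongrLeft (fun _ : Fin n => ℝ) σ.symm
  have hΦ : ∀ s : Fin n → ℝ,
      (MeasurableEquiv.piCongrLeft (fun _ : Fin n => ℝ) σ.symm) s = s ∘ σ := by
    intro s; funext j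
    have := MeasurableEquiv.piCongrLeft_apply_apply (σ.symm) (β := fun _ : Fin n => ℝ) s (σ j)
    simpa using this
  have hpre : (MeasurableEquiv.piCongrLeft (fun _ : Fin n => ℝ) σ.symm) ⁻¹' (B n 1) = B n σ := by
    ext s
    simp only [Set.mem_preimage, hΦ, B, Set.mem_inter_iff, Set.mem_setOf_eq]
    rw [memC_comp]
    constructor
    · rintro ⟨h1, h2⟩
      exact ⟨h1, by simpa [Function.comp] using h2⟩
    · rintro ⟨h1, h2⟩
      exact ⟨h1, by simpa [Function.comp] using h2⟩
  rw [← hpre, hmp.measure_preimage (measB 1).nullMeasurableSet]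

/-- the null set of tuples with a repeated coordinate -/
def N (n : ℕ) : Set (Fin n → ℝ) := ⋃ (i) (j) (_ : i ≠ j), {s : Fin n → ℝ | s i = s j}

lemma vol_eq_zero (i j : Fin n) (hij : i ≠ j) :
    volume {s : Fin n → ℝ | s i = s j} = 0 := by
  classical
  set L : (Fin n → ℝ) →ₗ[ℝ] ℝ :=
    (LinearMap.proj i : (Fin n → ℝ) →ₗ[ℝ] ℝ) - (LinearMap.proj j : (Fin n → ℝ) →ₗ[ℝ] ℝ) with hL
  have hset : {s : Fin n → ℝ | s i = s j} = (LinearMap.ker L : Set (Fin n → ℝ)) := by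
    ext s; simp [hL, sub_eq_zero, LinearMap.mem_ker, eq_comm]
  rw [hset]
  refine Measure.addHaar_submodule volume _ ?_
  intro htop
  have h1 : Pi.single i (1:ℝ) ∈ LinearMap.ker L := htop ▸ Submodule.mem_top
  simp [hL, LinearMap.mem_ker, Pi.single_apply, hij, Ne.symm hij] at h1

lemma volN : volume (N n) = 0 := by
  refine measure_iUnion_null fun i => measure_iUnion_null fun j => measure_iUnion_null fun h =>
    vol_eq_zero i j h

lemma cover : C n ⊆ (⋃ σ, B n σ) ∪ N n := by
  intro s hs
  by_cases hinj : Function.Injective s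
  · left
    refine Set.mem_iUnion.mpr ⟨Tuple.sort s, hs, ?_⟩
    exact (Tuple.monotone_sort s).strictMono_of_injective (hinj.comp (Tuple.sort s).injective)
  · right
    rw [Function.Injective] at hinj
    push_neg at hinj
    obtain ⟨a, b, hab, hne⟩ := hinj
    exact Set.mem_iUnion.mpr ⟨a, Set.mem_iUnion.mpr ⟨b, Set.mem_iUnion.mpr ⟨hne, hab⟩⟩⟩

lemma vol_B_one : volume (B n 1) = ENNReal.ofReal (1 / Nat.factorial n) := by
  have hU : volume (⋃ σ, B n σ) = 1 := by
    have hle1 : (1 : ℝ≥0∞) ≤ volume (⋃ σ, B n σ) := by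
      calc (1:ℝ≥0∞) = volume (C n) := volC.symm
        _ ≤ volume ((⋃ σ, B n σ) ∪ N n) := measure_mono cover
        _ ≤ volume (⋃ σ, B n σ) + volume (N n) := measure_union_le _ _
        _ = volume (⋃ σ, B n σ) := by rw [volN, add_zero]
    have hle2 : volume (⋃ σ, B n σ) ≤ 1 := by
      calc volume (⋃ σ, B n σ) ≤ volume (C n) :=
            measure_mono (Set.iUnion_subset fun σ => Set.inter_subset_left)
        _ = 1 := volC
    exact le_antisymm hle2 hle1
  have hsum : volume (⋃ σ, B n σ) = (Nat.factorial n : ℝ≥0∞) * volume (B n 1) := by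
    rw [measure_iUnion disjB measB, tsum_fintype]
    simp only [volB]
    rw [Finset.sum_const, Finset.card_univ, Fintype.card_perm, Fintype.card_fin,
      nsmul_eq_mul]
  have key : (Nat.factorial n : ℝ≥0∞) * volume (B n 1) = 1 := by rw [← hsum, hU]
  have hfac0 : (Nat.factorial n : ℝ≥0∞) ≠ 0 := by
    simp [Nat.factorial_ne_zero]
  have hfact : (Nat.factorial n : ℝ≥0∞) ≠ ⊤ := ENNReal.natCast_ne_top _
  have : volume (B n 1) = 1 / (Nat.factorial n : ℝ≥0∞) :=
    (ENNReal.eq_div_iff hfac0 hfact).mpr key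
  rw [this, ENNReal.ofReal_div_of_pos (by exact_mod_cast Nat.factorial_pos n)]
  rw [ENNReal.ofReal_one, ENNReal.ofReal_natCast]

lemma M_subset_one (r : Fin n → ℝ) (h1 : ∀ i, r i ≤ 1) :
    {s : Fin n → ℝ | (∀ i, 0 ≤ s i) ∧ Monotone s ∧ ∀ i, s i ≤ r i} ⊆
      {s : Fin n → ℝ | (∀ i, 0 ≤ s i) ∧ Monotone s ∧ ∀ i, s i ≤ 1} := by
  rintro s ⟨hs0, hsm, hsr⟩
  exact ⟨hs0, hsm, fun i => (hsr i).trans (h1 i)⟩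

lemma vol_M_one :
    volume {s : Fin n → ℝ | (∀ i, 0 ≤ s i) ∧ Monotone s ∧ ∀ i, s i ≤ 1} =
      ENNReal.ofReal (1 / Nat.factorial n) := by
  set M : Set (Fin n → ℝ) := {s | (∀ i, 0 ≤ s i) ∧ Monotone s ∧ ∀ i, s i ≤ 1} with hM
  have hB1M : B n 1 ⊆ M := by
    rintro s ⟨hsC, hsm⟩
    have hsm' : StrictMono s := by simpa [Function.comp] using hsm
    exact ⟨fun i => (hsC i (mem_univ _)).1, hsm'.monotone, fun i => (hsC i (mem_univ _)).2⟩
  have hMB : M ⊆ B n 1 ∪ N n := by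
    rintro s ⟨hs0, hsm, hs1⟩
    by_cases hinj : Function.Injective s
    · left
      refine ⟨fun i _ => ⟨hs0 i, hs1 i⟩, ?_⟩
      have := hsm.strictMono_of_injective hinj
      simpa [Function.comp] using this
    · right
      rw [Function.Injective] at hinj
      push_neg at hinj
      obtain ⟨a, b, hab, hne⟩ := hinj
      exact Set.mem_iUnion.mpr ⟨a, Set.mem_iUnion.mpr ⟨b, Set.mem_iUnion.mpr ⟨hne, hab⟩⟩⟩
  have hle1 : volume M ≤ volume (B n 1) := by
    calc volume M ≤ volume (B n 1 ∪ N n) := measure_mono hMB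
      _ ≤ volume (B n 1) + volume (N n) := measure_union_le _ _
      _ = volume (B n 1) := by rw [volN, add_zero]
  have hle2 : volume (B n 1) ≤ volume M := measure_mono hB1M
  rw [le_antisymm hle1 hle2, vol_B_one]

end Stmt7Aux

theorem stmt_7 (n : ℕ) (r : Fin n → ℝ) (hmono : Monotone r)
    (h0 : ∀ i, 0 ≤ r i) (h1 : ∀ i, r i ≤ 1) :
    0 ≤ (volume {s : Fin n → ℝ | (∀ i, 0 ≤ s i) ∧ Monotone s ∧ ∀ i, s i ≤ r i}).toReal ∧
    volume {s : Fin n → ℝ | (∀ i, 0 ≤ s i) ∧ Monotone s ∧ ∀ i, s i ≤ r i} ≤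
      ENNReal.ofReal (1 / Nat.factorial n) ∧
    (volume {s : Fin n → ℝ | (∀ i, 0 ≤ s i) ∧ Monotone s ∧ ∀ i, s i ≤ r i} =
      ENNReal.ofReal (1 / Nat.factorial n) ↔ ∀ i, r i = 1) := by
  have hsub := Stmt7Aux.M_subset_one r h1
  have hvol1 := Stmt7Aux.vol_M_one (n := n)
  refine ⟨ENNReal.toReal_nonneg, ?_, ?_⟩
  · calc volume {s : Fin n → ℝ | (∀ i, 0 ≤ s i) ∧ Monotone s ∧ ∀ i, s i ≤ r i}
        ≤ volume {s : Fin n → ℝ | (∀ i, 0 ≤ s i) ∧ Monotone s ∧ ∀ i, s i ≤ 1} :=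
          measure_mono hsub
      _ = ENNReal.ofReal (1 / Nat.factorial n) := hvol1
  · constructor
    · intro heq
      by_contra hr
      push_neg at hr
      obtain ⟨i0, hi0⟩ := hr
      have hi0' : r i0 < 1 := lt_of_le_of_ne (h1 i0) hi0
      set a := r i0 with ha
      set δ := (1 - a) / (n + 1) with hδ
      have hδpos : 0 < δ := by
        apply div_pos (by linarith) (by positivity)
      set box : Set (Fin n → ℝ) :=
        Set.univ.pi fun i : Fin n => Set.Ioo (a + i * δ) (a + (i + 1) * δ) with hbox
      -- box is inside M(1)
      have hboxM1 : box ⊆ {s : Fin n → ℝ | (∀ i, 0 ≤ s i) ∧ Monotone s ∧ ∀ i, s i ≤ 1} := by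
        intro s hs
        have hmem : ∀ i : Fin n, a + (i:ℕ) * δ < s i ∧ s i < a + ((i:ℕ) + 1) * δ := by
          intro i; exact hs i (Set.mem_univ _)
        refine ⟨?_, ?_, ?_⟩
        · intro i
          have hnn : (0:ℝ) ≤ ((i:ℕ) : ℝ) := Nat.cast_nonneg _
          have ha0 : (0:ℝ) ≤ a := h0 i0
          nlinarith [(hmem i).1, hδpos]
        · intro i j hij
          rcases eq_or_lt_of_le hij with heq' | hlt
          · rw [heq']
          · have h1' : s i < a + ((i:ℕ) + 1) * δ := (hmem i).2
            have h2' : a + (j:ℕ) * δ < s j := (hmem j).1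
            have hij' : ((i:ℕ) : ℝ) + 1 ≤ ((j:ℕ) : ℝ) := by
              have : (i:ℕ) + 1 ≤ (j:ℕ) := hlt
              exact_mod_cast this
            nlinarith [hδpos]
        · intro i
          have h1' : s i < a + ((i:ℕ) + 1) * δ := (hmem i).2
          have hin : ((i:ℕ) : ℝ) + 1 ≤ (n : ℝ) + 1 := by
            have : (i:ℕ) < n := i.isLt
            have : ((i:ℕ):ℝ) ≤ (n:ℝ) := by exact_mod_cast this.le
            linarith
          have : a + ((n:ℝ) + 1) * δ = 1 := by
            rw [hδ]; field_simp; ring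
          nlinarith [hδpos]
      -- box is disjoint from M(r)
      have hboxMr : ∀ s ∈ box,
          s ∉ {s : Fin n → ℝ | (∀ i, 0 ≤ s i) ∧ Monotone s ∧ ∀ i, s i ≤ r i} := by
        rintro s hs ⟨-, -, hsr⟩
        have h1' : a + (i0:ℕ) * δ < s i0 := (hs i0 (Set.mem_univ _)).1
        have h2' : s i0 ≤ a := hsr i0
        have hnn : (0:ℝ) ≤ ((i0:ℕ) : ℝ) := Nat.cast_nonneg _
        nlinarith [hδpos]
      -- volume of box is positive and finite
      have hvolbox : volume box = ENNReal.ofReal δ ^ n := by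
        rw [hbox, volume_pi_pi]
        have : ∀ i : Fin n, volume (Set.Ioo (a + (i:ℕ) * δ) (a + ((i:ℕ) + 1) * δ))
            = ENNReal.ofReal δ := by
          intro i
          rw [Real.volume_Ioo]
          congr 1
          ring
        simp only [this]
        rw [Finset.prod_const, Finset.card_univ, Fintype.card_fin]
      have hboxpos : volume box ≠ 0 := by
        rw [hvolbox]
        exact pow_ne_zero _ (by simp only [ne_eq, ENNReal.ofReal_eq_zero, not_le]; linarith)
      have hboxfin : volume box ≠ ⊤ := by
        rw [hvolbox]
        exact ENNReal.pow_ne_top ENNReal.ofReal_ne_top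
      -- conclude strict inequality
      have hsub2 : {s : Fin n → ℝ | (∀ i, 0 ≤ s i) ∧ Monotone s ∧ ∀ i, s i ≤ r i} ⊆
          {s : Fin n → ℝ | (∀ i, 0 ≤ s i) ∧ Monotone s ∧ ∀ i, s i ≤ 1} \ box := by
        intro s hsM
        exact ⟨hsub hsM, fun hsb => hboxMr s hsb hsM⟩
      have hboxmeas : NullMeasurableSet box volume :=
        (MeasurableSet.univ_pi fun i => measurableSet_Ioo).nullMeasurableSet
      have hdiff : volume ({s : Fin n → ℝ | (∀ i, 0 ≤ s i) ∧ Monotone s ∧ ∀ i, s i ≤ 1} \ box)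
          = ENNReal.ofReal (1 / Nat.factorial n) - volume box := by
        rw [measure_diff hboxM1 hboxmeas hboxfin, hvol1]
      have hlt : volume {s : Fin n → ℝ | (∀ i, 0 ≤ s i) ∧ Monotone s ∧ ∀ i, s i ≤ r i}
          < ENNReal.ofReal (1 / Nat.factorial n) := by
        calc volume {s : Fin n → ℝ | (∀ i, 0 ≤ s i) ∧ Monotone s ∧ ∀ i, s i ≤ r i}
            ≤ ENNReal.ofReal (1 / Nat.factorial n) - volume box := by
              rw [← hdiff]; exact measure_mono hsub2
          _ < ENNReal.ofReal (1 / Nat.factorial n) := by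
              apply ENNReal.sub_lt_self ENNReal.ofReal_ne_top ?_ hboxpos
              simp only [ne_eq, ENNReal.ofReal_eq_zero, not_le]
              positivity
      exact absurd heq hlt.ne
    · intro hr
      have : r = fun _ => 1 := funext hr
      subst this
      exact hvol1
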